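/- Let X be a Tychonoff (completely regular Hausdorff) space with ind X = 0, i.e., whose clopen subsets form a base of the topology. Then there exists a topology τ on the free Boolean group B(X) on X, realized as the group of finitely supported functions g : X → ℤ/2 with pointwise addition, such that: (B(X), τ) is a Hausdorff topological group; τ has a base of neighborhoods of 0 consisting of open subgroups; the map sending x ∈ X to the indicator function δ_x of {x} is a homeomorphism of X onto a closed subspace of (B(X), τ); and for every n ∈ ℕ the set B_n(X) = {g : |supp(g)| ≤ n} of words of length at most n is closed in (B(X), τ). -/

import Mathlib

namespace Stmt19Aux

open Finset Topology Filter Set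
open scoped Classical

variable {X : Type*} [TopologicalSpace X]

/-- The clopen subsets of `X`. -/
abbrev Clo (X : Type*) [TopologicalSpace X] := {U : Set X // IsClopen U}

/-- The canonical homomorphism from the free Boolean group into the product of
copies of `ZMod 2` indexed by clopen sets, counting the parity of the support in each
clopen set. -/
noncomputable def phi : (X →₀ ZMod 2) →+ (Clo X → ZMod 2) where
  toFun g := fun U => g.sum fun x c => if x ∈ U.1 then c else 0
  map_zero' := by ext U; simp
  map_add' g h := by
    funext U
    show ((g + h).sum fun x c => if x ∈ U.1 then c else 0) =
      (g.sum fun x c => if x ∈ U.1 then c else 0) + (h.sum fun x c => if x ∈ U.1 then c else 0)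
    exact Finsupp.sum_add_index' (fun a => by split <;> rfl)
      (fun a b₁ b₂ => by split <;> simp)

lemma phi_apply (g : X →₀ ZMod 2) (U : Clo X) :
    phi g U = ∑ x ∈ g.support, if x ∈ U.1 then g x else 0 := rfl

lemma phi_eq_single (g : X →₀ ZMod 2) (U : Clo X) (x : X)
    (h : ∀ y ∈ g.support, (y ∈ U.1 ↔ y = x)) : phi g U = g x := by
  rw [phi_apply]
  rw [Finset.sum_congr rfl (fun y hy => if_congr (h y hy) rfl rfl)]
  rw [Finset.sum_ite_eq' g.support x (fun y => g y)]
  by_cases hx : x ∈ g.support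
  · simp [hx]
  · simp [hx, Finsupp.notMem_support_iff.1 hx]

lemma phi_eq_zero_of_disj (g : X →₀ ZMod 2) (U : Clo X)
    (h : ∀ y ∈ g.support, y ∉ U.1) : phi g U = 0 := by
  rw [phi_apply]
  exact Finset.sum_eq_zero fun y hy => if_neg (h y hy)

lemma phi_single (x : X) (U : Clo X) :
    phi (Finsupp.single x (1 : ZMod 2)) U = if x ∈ U.1 then 1 else 0 := by
  rw [phi_apply, Finsupp.support_single_ne_zero x (by decide : (1 : ZMod 2) ≠ 0)]
  simp

/-- Choice of pairwise disjoint clopen neighborhoods of the points of a finite set. -/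
lemma exists_disjoint_clopens [T1Space X]
    (hzd : ∀ (x : X) (U : Set X), IsOpen U → x ∈ U →
      ∃ V : Set X, IsClopen V ∧ x ∈ V ∧ V ⊆ U) (s : Finset X) :
    ∃ W : X → Set X, (∀ x, IsClopen (W x)) ∧ (∀ x ∈ s, x ∈ W x) ∧
      (∀ x ∈ s, ∀ y ∈ s, y ∈ W x → y = x) ∧
      (∀ x ∈ s, ∀ y ∈ s, x ≠ y → Disjoint (W x) (W y)) := by
  have hV : ∀ x : X, ∃ V : Set X, IsClopen V ∧ x ∈ V ∧ V ⊆ (↑(s.erase x) : Set X)ᶜ := by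
    intro x
    refine hzd x _ ?_ ?_
    · exact (Set.Finite.isClosed (Finset.finite_toSet _)).isOpen_compl
    · simp
  choose V hVc hVx hVs using hV
  refine ⟨fun x => V x \ ⋃ y ∈ s.erase x, V y, ?_, ?_, ?_, ?_⟩
  · intro x
    exact (hVc x).diff (isClopen_biUnion_finset fun y _ => hVc y)
  · intro x hx
    refine ⟨hVx x, ?_⟩
    simp only [Set.mem_iUnion, not_exists]
    intro y hy hxy
    have : x ∈ (↑(s.erase y) : Set X)ᶜ := hVs y hxy
    exact this (by simp [hx, (Finset.ne_of_mem_erase hy).symm])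
  · intro x hx y hy hyW
    by_contra hne
    exact hyW.2 (Set.mem_biUnion (Finset.mem_erase.2 ⟨hne, hy⟩) (hVx y))
  · intro x hx y hy hne
    refine Set.disjoint_left.2 fun z hzx hzy => ?_
    exact hzx.2 (Set.mem_biUnion (Finset.mem_erase.2 ⟨fun h => hne h.symm, hy⟩) hzy.1)

/-- Key separation: around `phi g` there is an open set forcing the support to be
at least as large as that of `g`. -/
lemma sep [T1Space X]
    (hzd : ∀ (x : X) (U : Set X), IsOpen U → x ∈ U →
      ∃ V : Set X, IsClopen V ∧ x ∈ V ∧ V ⊆ U) (g : X →₀ ZMod 2) :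
    ∃ N : Set (Clo X → ZMod 2), IsOpen N ∧ phi g ∈ N ∧
      ∀ h : X →₀ ZMod 2, phi h ∈ N → g.support.card ≤ h.support.card := by
  obtain ⟨W, hWc, hWx, hWs, hWd⟩ := exists_disjoint_clopens hzd g.support
  refine ⟨⋂ x ∈ g.support, (fun f => f ⟨W x, hWc x⟩) ⁻¹' {phi g ⟨W x, hWc x⟩}, ?_, ?_, ?_⟩
  · exact isOpen_biInter_finset fun x _ =>
      (continuous_apply _).isOpen_preimage _ (isOpen_discrete _)
  · exact Set.mem_iInter₂.2 fun x hx => rfl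
  · intro h hh
    have key : ∀ x ∈ g.support, ∃ z, z ∈ h.support ∧ z ∈ W x := by
      intro x hx
      have h1 : phi h ⟨W x, hWc x⟩ = phi g ⟨W x, hWc x⟩ := Set.mem_iInter₂.1 hh x hx
      have h2 : phi g ⟨W x, hWc x⟩ = g x :=
        phi_eq_single g _ x fun y hy => ⟨fun hyW => hWs x hx y hy hyW,
          fun hyx => hyx ▸ hWx x hx⟩
      by_contra hno
      push_neg at hno
      have : phi h ⟨W x, hWc x⟩ = 0 := phi_eq_zero_of_disj h _ fun y hy => hno y hy
      rw [this, h2] at h1  -- h1 : 0 = g x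
      exact Finsupp.mem_support_iff.1 hx h1.symm
    choose c hc1 hc2 using key
    refine Finset.card_le_card_of_injOn (fun x => if hx : x ∈ g.support then c x hx else x)
      (fun x hx => by have hx' : x ∈ g.support := hx; simp only [dif_pos hx', Finset.mem_coe]; exact hc1 x hx') ?_
    intro x hx y hy hxy
    simp only [Finset.mem_coe] at hx hy
    simp only [dif_pos hx, dif_pos hy] at hxy
    by_contra hne
    exact Set.disjoint_left.1 (hWd x hx y hy hne) (hc2 x hx) (hxy ▸ hc2 y hy)

lemma phi_injective [T1Space X]
    (hzd : ∀ (x : X) (U : Set X), IsOpen U → x ∈ U →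
      ∃ V : Set X, IsClopen V ∧ x ∈ V ∧ V ⊆ U) :
    Function.Injective (phi (X := X)) := by
  rw [injective_iff_map_eq_zero]
  intro g hg
  obtain ⟨W, hWc, hWx, hWs, _⟩ := exists_disjoint_clopens hzd g.support
  ext x
  by_contra hx
  have hx' : x ∈ g.support := Finsupp.mem_support_iff.2 (by simpa using hx)
  have : phi g ⟨W x, hWc x⟩ = g x :=
    phi_eq_single g _ x fun y hy => ⟨fun hyW => hWs x hx' y hy hyW, fun h => h ▸ hWx x hx'⟩
  rw [hg] at this
  exact Finsupp.mem_support_iff.1 hx' this.symm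

lemma continuous_coord (U : Clo X) :
    Continuous fun x : X => (if x ∈ U.1 then (1 : ZMod 2) else 0) := by
  rw [continuous_discrete_rng]
  intro b
  have hb : b = 0 ∨ b = 1 := by
    have : ∀ c : ZMod 2, c = 0 ∨ c = 1 := by decide
    exact this b
  rcases hb with rfl | rfl
  · have : (fun x : X => (if x ∈ U.1 then (1 : ZMod 2) else 0)) ⁻¹' {0} = U.1ᶜ := by
      ext x; by_cases hx : x ∈ U.1 <;> simp [hx]
    rw [this]; exact U.2.compl.isOpen
  · have : (fun x : X => (if x ∈ U.1 then (1 : ZMod 2) else 0)) ⁻¹' {1} = U.1 := by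
      ext x; by_cases hx : x ∈ U.1 <;> simp [hx]
    rw [this]; exact U.2.isOpen

end Stmt19Aux

open Stmt19Aux Topology Filter in
/-- For every Tychonoff space `X` with `ind X = 0` (the clopen sets form a base)
there is a Hausdorff group topology on the free Boolean group on `X`, realized
as the finitely supported functions `X →₀ ZMod 2`, with a base of neighborhoods
of `0` consisting of open subgroups, in which `X` (embedded via `x ↦ δ_x`) is a
closed subspace and each set of words of length at most `n` is closed. -/
theorem stmt19 {X : Type*} [TopologicalSpace X] [T35Space X]
    (hzd : ∀ (x : X) (U : Set X), IsOpen U → x ∈ U →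
      ∃ V : Set X, IsClopen V ∧ x ∈ V ∧ V ⊆ U) :
    ∃ τ : TopologicalSpace (X →₀ ZMod 2),
      @IsTopologicalAddGroup (X →₀ ZMod 2) τ _ ∧
      @T2Space (X →₀ ZMod 2) τ ∧
      (∀ U : Set (X →₀ ZMod 2), U ∈ @nhds _ τ 0 →
        ∃ H : AddSubgroup (X →₀ ZMod 2), τ.IsOpen (H : Set (X →₀ ZMod 2)) ∧
          (H : Set (X →₀ ZMod 2)) ⊆ U) ∧
      @Topology.IsClosedEmbedding X (X →₀ ZMod 2) _ τ (fun x => Finsupp.single x 1) ∧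
      (∀ n : ℕ, @IsClosed _ τ {g : X →₀ ZMod 2 | g.support.card ≤ n}) := by
  classical
  have h10 : (1 : ZMod 2) ≠ 0 := by decide
  set P : TopologicalSpace (Clo X → ZMod 2) := inferInstance with hP
  set τ : TopologicalSpace (X →₀ ZMod 2) := TopologicalSpace.induced phi P with hτ
  have hnhds : ∀ g : X →₀ ZMod 2, @nhds _ τ g = Filter.comap phi (nhds (phi g)) :=
    fun g => nhds_induced phi g
  -- the separation lemma specialized
  have hsep := sep (X := X) hzd
  refine ⟨τ, topologicalAddGroup_induced phi, ?_, ?_, ?_, ?_⟩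
  · -- T2
    letI := τ
    have hemb : Topology.IsEmbedding (phi (X := X)) := ⟨⟨rfl⟩, phi_injective hzd⟩
    exact hemb.t2Space
  · -- base of open subgroups
    intro U hU
    rw [hnhds 0, map_zero] at hU
    obtain ⟨W, hW, hWU⟩ := Filter.mem_comap.1 hU
    rw [nhds_pi, Filter.mem_pi] at hW
    obtain ⟨I, hIfin, t, ht, htW⟩ := hW
    let K : AddSubgroup (Clo X → ZMod 2) :=
      { carrier := {f | ∀ i ∈ I, f i = 0}
        add_mem' := fun {a b} ha hb i hi => by
          simp [Pi.add_apply, ha i hi, hb i hi]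
        zero_mem' := fun i _ => rfl
        neg_mem' := fun {a} ha i hi => by simp [Pi.neg_apply, ha i hi] }
    refine ⟨K.comap phi, ?_, ?_⟩
    · refine isOpen_induced_iff.2 ⟨K, ?_, rfl⟩
      have hKset : (K : Set (Clo X → ZMod 2)) = ⋂ i ∈ I, (fun f => f i) ⁻¹' {0} := by
        ext f; simp [K]
      rw [hKset]
      exact hIfin.isOpen_biInter fun i _ =>
        (continuous_apply i).isOpen_preimage _ (isOpen_discrete _)
    · intro g hg
      apply hWU
      apply htW
      intro i hi
      have : phi g i = 0 := hg i hi
      rw [this]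
      exact mem_of_mem_nhds (ht i)
  · -- closed embedding
    have hψ : (phi ∘ fun x : X => Finsupp.single x (1 : ZMod 2)) =
        fun x : X => fun U : Clo X => if x ∈ U.1 then (1 : ZMod 2) else 0 := by
      funext x U; exact phi_single x U
    have hind : ‹TopologicalSpace X› =
        TopologicalSpace.induced (fun x : X => Finsupp.single x (1 : ZMod 2)) τ := by
      rw [hτ, induced_compose, hψ]
      refine le_antisymm ?_ ?_
      · rw [← continuous_iff_le_induced]
        exact continuous_pi fun U => continuous_coord U
      · rw [TopologicalSpace.le_def]
        intro s hs
        rw [@isOpen_iff_forall_mem_open _ (TopologicalSpace.induced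
          (fun x : X => fun U : Clo X => if x ∈ U.1 then (1 : ZMod 2) else 0) P) s]
        intro x hx
        obtain ⟨V, hVc, hxV, hVs⟩ := hzd x s hs hx
        refine ⟨V, hVs, ?_, hxV⟩
        have : V = (fun x : X => fun U : Clo X => if x ∈ U.1 then (1 : ZMod 2) else 0) ⁻¹'
            ((fun f : Clo X → ZMod 2 => f ⟨V, hVc⟩) ⁻¹' {1}) := by
          ext y
          by_cases hy : y ∈ V <;> simp [hy, h10]
        rw [this]
        exact isOpen_induced (((continuous_apply _).isOpen_preimage _ (isOpen_discrete _)))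
    refine ⟨⟨⟨hind⟩, fun a b hab => ?_⟩, ?_⟩
    · exact Finsupp.single_left_injective h10 hab
    · -- closed range
      letI := τ
      rw [← isOpen_compl_iff, isOpen_iff_mem_nhds]
      intro g hg
      rw [hnhds g, Filter.mem_comap]
      rcases Nat.lt_or_ge g.support.card 2 with hlt | hge
      · interval_cases h : g.support.card
        · -- g = 0
          have hg0 : g = 0 := Finsupp.support_eq_empty.1 (Finset.card_eq_zero.1 h)
          refine ⟨(fun f : Clo X → ZMod 2 => f ⟨Set.univ, isClopen_univ⟩) ⁻¹' {0}, ?_, ?_⟩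
          · refine IsOpen.mem_nhds
              ((continuous_apply _).isOpen_preimage _ (isOpen_discrete _)) ?_
            simp [hg0]
          · intro h hh hmem
            obtain ⟨x, hx⟩ := hmem
            simp only [Set.mem_preimage, Set.mem_singleton_iff] at hh
            rw [← hx, phi_single] at hh
            simp only [Set.mem_univ, if_true] at hh
            exact h10 hh
        · -- card 1 : g is in the range, contradiction
          exfalso
          obtain ⟨a, b, hb, hgab⟩ := Finsupp.card_support_eq_one'.1 h
          have hb1 : b = 1 := by
            have : ∀ c : ZMod 2, c ≠ 0 → c = 1 := by decide
            exact this b hb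
          exact hg ⟨a, by rw [hgab, hb1]⟩
      · obtain ⟨N, hNo, hNmem, hNcard⟩ := hsep g
        refine ⟨N, hNo.mem_nhds hNmem, ?_⟩
        intro h hh hmem
        obtain ⟨x, hx⟩ := hmem
        have hc := hNcard h hh
        rw [← hx, Finsupp.support_single_ne_zero x h10] at hc
        simp at hc
        omega
  · -- words of length ≤ n closed
    intro n
    letI := τ
    rw [← isOpen_compl_iff, isOpen_iff_mem_nhds]
    intro g hg
    simp only [Set.mem_compl_iff, Set.mem_setOf_eq, not_le] at hg
    rw [hnhds g, Filter.mem_comap]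
    obtain ⟨N, hNo, hNmem, hNcard⟩ := hsep g
    refine ⟨N, hNo.mem_nhds hNmem, ?_⟩
    intro h hh
    simp only [Set.mem_compl_iff, Set.mem_setOf_eq, not_le]
    exact lt_of_lt_of_le hg (hNcard h hh)
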